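/- (Optimal preconditioning coefficients) Let x_γ = α_γ x₀ + σ_γ ε with Var[x₀] = σ_data² I (per coordinate) and ε ~ N(0,I) independent. Consider the parameterization ε_θ(x_γ) = c_skip·x_γ + c_out·F_θ(c_in·x_γ). The choices ensuring (1) Var[c_in·x_γ] = 1, (2) Var[(ε - c_skip·x_γ)/c_out] = 1, and (3) c_skip minimizes c_out² subject to (2), are: c_in = 1/√(σ_γ² + σ_data²α_γ²), c_skip = σ_γ/(σ_γ² + σ_data²α_γ²), c_out = σ_data·α_γ/√(σ_γ² + σ_data²α_γ²). In particular, if σ_data = 1 and α_γ² + σ_γ² = 1, then c_in = 1, c_skip = σ_γ, c_out = α_γ. -/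
import Mathlib


open Real

/-- Optimal preconditioning coefficients (EDM first principles): with per-coordinate
data variance `σ_data²`, the choices `c_in = 1/√(σ² + σ_data²α²)`,
`c_skip = σ/(σ² + σ_data²α²)`, `c_out = σ_data·α/√(σ² + σ_data²α²)` give unit input
variance, unit effective-target variance, and `c_skip` uniquely minimizes `c_out²`.
If `σ_data = 1` and `α² + σ² = 1`, they reduce to `c_in = 1, c_skip = σ, c_out = α`. -/
theorem optimal_preconditioning (σd αg σg : ℝ) (hσd : 0 < σd) (hα : 0 < αg) (hσ : 0 < σg)
    (cin cskip cout : ℝ)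
    (hcin : cin = (Real.sqrt (σg ^ 2 + σd ^ 2 * αg ^ 2))⁻¹)
    (hcskip : cskip = σg / (σg ^ 2 + σd ^ 2 * αg ^ 2))
    (hcout : cout = σd * αg / Real.sqrt (σg ^ 2 + σd ^ 2 * αg ^ 2)) :
    -- (1) unit variance of the network input: Var[c_in x_γ] = c_in²(α²σ_data² + σ²) = 1
    cin ^ 2 * (σg ^ 2 + σd ^ 2 * αg ^ 2) = 1 ∧
    -- (2) unit variance of the effective target: c_out² = Var[ε - c_skip x_γ]
    cout ^ 2 = (1 - cskip * σg) ^ 2 + cskip ^ 2 * αg ^ 2 * σd ^ 2 ∧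
    -- (3) c_skip is the unique minimizer of c ↦ (1 - cσ)² + c²α²σ_data²
    (∀ c : ℝ, (1 - cskip * σg) ^ 2 + cskip ^ 2 * αg ^ 2 * σd ^ 2
      ≤ (1 - c * σg) ^ 2 + c ^ 2 * αg ^ 2 * σd ^ 2) ∧
    (∀ c : ℝ, c ≠ cskip → (1 - cskip * σg) ^ 2 + cskip ^ 2 * αg ^ 2 * σd ^ 2
      < (1 - c * σg) ^ 2 + c ^ 2 * αg ^ 2 * σd ^ 2) ∧
    (σd = 1 → αg ^ 2 + σg ^ 2 = 1 → cin = 1 ∧ cskip = σg ∧ cout = αg) := by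
  have hS : 0 < σg ^ 2 + σd ^ 2 * αg ^ 2 := by positivity
  set S := σg ^ 2 + σd ^ 2 * αg ^ 2 with hSdef
  have hsq : Real.sqrt S ^ 2 = S := Real.sq_sqrt hS.le
  have hsqpos : 0 < Real.sqrt S := Real.sqrt_pos.mpr hS
  have key : ∀ c : ℝ, (1 - c * σg) ^ 2 + c ^ 2 * αg ^ 2 * σd ^ 2
      = S * (c - cskip) ^ 2 + σd ^ 2 * αg ^ 2 / S := by
    intro c
    rw [hcskip]
    field_simp
    ring
  refine ⟨?_, ?_, ?_, ?_, ?_⟩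
  · rw [hcin, inv_pow, hsq, inv_mul_cancel₀ hS.ne']
  · rw [key cskip, hcout, div_pow, hsq, sub_self]
    ring
  · intro c
    rw [key c, key cskip, sub_self]
    nlinarith [sq_nonneg (c - cskip)]
  · intro c hc
    rw [key c, key cskip, sub_self]
    have hne : c - cskip ≠ 0 := sub_ne_zero.mpr hc
    have : 0 < (c - cskip) ^ 2 := by positivity
    nlinarith
  · rintro rfl h1
    have hS1 : S = 1 := by rw [hSdef]; linarith
    rw [hcin, hcskip, hcout, hS1, Real.sqrt_one]
    norm_num
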